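/- Let r ∈ ℕ, 𝐦 ∈ ℕ^{r+1}, and w : ℕ_𝐦 → ℚ. For 𝐮, 𝐢 ∈ ℕ^{r+1} with 𝐮 + 𝐢 ∈ ℕ_𝐦, define c_𝐢^𝐮 = 2^{−|𝐢|} · Σ_{𝟎 ≤ 𝐥 ≤ 𝐢} (−1)^{|𝐢|−|𝐥|} · binom(𝐢,𝐥) · w_{𝐦−𝐮−𝐥} ∈ ℚ. Then: (a) c_𝟎^𝐮 = w_{𝐦−𝐮} for all 𝐮 ∈ ℕ_𝐦; (b) for every index j ∈ {0,…,r} with i_j ≥ 1, one has c_𝐢^𝐮 = (c_{𝐢−e_j}^{𝐮+e_j} − c_{𝐢−e_j}^{𝐮})/2, where e_j is the j-th standard basis vector (so the triangle recursion is well defined, independent of the choice of j, and computed by this closed formula); (c) the vector b given by b_𝐢 = c_𝐢^𝟎 satisfies M_𝐦 b = w, i.e. for every 𝐬 ∈ ℕ_𝐦, Σ_{𝐢 ∈ ℕ_𝐦} 2^{|𝐢|} · binom(𝐦−𝐬, 𝐢) · b_𝐢 = w_𝐬. -/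

import Mathlib

/-- The closed formula for the entries of the multireal triangle:
`c_𝐢^𝐮 = 2^{-|𝐢|} · Σ_{𝟎 ≤ 𝐥 ≤ 𝐢} (-1)^{|𝐢|-|𝐥|} binom(𝐢,𝐥) w_{𝐦-𝐮-𝐥}`. -/
def triC (r : ℕ) (m : Fin (r + 1) → ℕ) (w : (Fin (r + 1) → ℕ) → ℚ)
    (u i : Fin (r + 1) → ℕ) : ℚ :=
  ((2 : ℚ) ^ (∑ j, i j))⁻¹ *
    ∑ l : (j : Fin (r + 1)) → Fin (i j + 1),
      (-1 : ℚ) ^ ((∑ j, i j) - ∑ j, (l j : ℕ)) *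
        (∏ j, ((i j).choose (l j : ℕ) : ℚ)) *
        w (fun j => m j - u j - (l j : ℕ))


private def below {N : ℕ} (n : Fin N → ℕ) : Finset (Fin N → ℕ) :=
  Fintype.piFinset fun k => Finset.range (n k + 1)

private lemma mem_below {N : ℕ} {n g : Fin N → ℕ} : g ∈ below n ↔ ∀ k, g k ≤ n k := by
  simp [below, Nat.lt_succ_iff]

private lemma sum_fin_pi {N : ℕ} (n : Fin N → ℕ) (F : (Fin N → ℕ) → ℚ) :
    (∑ l : (k : Fin N) → Fin (n k + 1), F fun k => (l k : ℕ)) = ∑ l ∈ below n, F l := by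
  refine Finset.sum_bij' (fun l _ => fun k => (l k : ℕ))
    (fun g hg => fun k => ⟨g k, Nat.lt_succ_of_le (mem_below.1 hg k)⟩) ?_ ?_ ?_ ?_ ?_
  · intro a _; exact mem_below.2 fun k => Nat.lt_succ_iff.1 (a k).isLt
  · intro g hg; exact Finset.mem_univ _
  · intro a ha; funext k; rfl
  · intro g hg; funext k; rfl
  · intro a ha; rfl

private lemma neg_one_pow_sub (a b : ℕ) (h : b ≤ a) : (-1 : ℚ) ^ (a - b) = (-1) ^ a * (-1) ^ b := by
  have h2 : (-1 : ℚ) ^ b * (-1) ^ b = 1 := by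
    rw [← pow_add, ← two_mul, pow_mul]; norm_num
  calc (-1 : ℚ) ^ (a - b) = (-1) ^ (a - b) * ((-1) ^ b * (-1) ^ b) := by rw [h2, mul_one]
    _ = ((-1) ^ (a - b) * (-1) ^ b) * (-1) ^ b := by ring
    _ = (-1) ^ a * (-1) ^ b := by rw [← pow_add, Nat.sub_add_cancel h]

private def Sfun (r : ℕ) (m : Fin (r + 1) → ℕ) (w : (Fin (r + 1) → ℕ) → ℚ)
    (u n : Fin (r + 1) → ℕ) : ℚ :=
  ∑ l ∈ below n, (-1 : ℚ) ^ (∑ k, l k) * (∏ k, ((n k).choose (l k) : ℚ)) *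
    w (fun k => m k - u k - l k)

private lemma triC_eq (r : ℕ) (m : Fin (r + 1) → ℕ) (w : (Fin (r + 1) → ℕ) → ℚ)
    (u i : Fin (r + 1) → ℕ) :
    triC r m w u i
      = ((2 : ℚ) ^ (∑ j, i j))⁻¹ * ((-1) ^ (∑ j, i j) * Sfun r m w u i) := by
  have h1 : (∑ l : (j : Fin (r + 1)) → Fin (i j + 1),
      (-1 : ℚ) ^ ((∑ j, i j) - ∑ j, (l j : ℕ)) *
        (∏ j, ((i j).choose (l j : ℕ) : ℚ)) *
        w (fun j => m j - u j - (l j : ℕ)))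
      = ∑ l ∈ below i, (-1 : ℚ) ^ ((∑ j, i j) - ∑ j, l j) *
          (∏ j, ((i j).choose (l j) : ℚ)) * w (fun j => m j - u j - l j) :=
    sum_fin_pi i fun l => (-1 : ℚ) ^ ((∑ j, i j) - ∑ j, l j) *
      (∏ j, ((i j).choose (l j) : ℚ)) * w (fun j => m j - u j - l j)
  rw [triC, h1, Sfun]
  congr 1
  rw [Finset.mul_sum]
  refine Finset.sum_congr rfl fun l hl => ?_
  have hle : (∑ j, l j) ≤ ∑ j, i j :=
    Finset.sum_le_sum fun j _ => mem_below.1 hl j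
  rw [neg_one_pow_sub _ _ hle]
  ring

private lemma sum_below_split {N : ℕ} (n : Fin N → ℕ) (j : Fin N) (F : (Fin N → ℕ) → ℚ) :
    ∑ g ∈ below n, F g
      = ∑ x ∈ Finset.range (n j + 1), ∑ g ∈ below (Function.update n j 0),
          F (Function.update g j x) := by
  rw [← Finset.sum_product']
  refine Finset.sum_bij' (fun g _ => ((g j : ℕ), Function.update g j 0))
    (fun p _ => Function.update p.2 j p.1) ?_ ?_ ?_ ?_ ?_
  · intro g hg
    rw [Finset.mem_product]
    constructor
    · exact Finset.mem_range.2 (Nat.lt_succ_of_le (mem_below.1 hg j))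
    · refine mem_below.2 fun k => ?_
      by_cases hk : k = j
      · subst hk; simp
      · simp only [Function.update_of_ne hk]
        exact mem_below.1 hg k
  · intro p hp
    rw [Finset.mem_product] at hp
    refine mem_below.2 fun k => ?_
    by_cases hk : k = j
    · subst hk; rw [Function.update_self]
      exact Nat.lt_succ_iff.1 (Finset.mem_range.1 hp.1)
    · rw [Function.update_of_ne hk]
      have := mem_below.1 hp.2 k
      rwa [Function.update_of_ne hk] at this
  · intro g hg
    simp [Function.update_idem]
  · intro p hp
    rw [Finset.mem_product] at hp
    have h0 : p.2 j = 0 := by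
      have := mem_below.1 hp.2 j
      rwa [Function.update_self, Nat.le_zero] at this
    refine Prod.ext ?_ ?_
    · simp
    · simp only [Function.update_idem]
      rw [← h0, Function.update_eq_self]
  · intro g hg
    rw [Function.update_idem, Function.update_eq_self]

private lemma sum_update_eq {N : ℕ} (g : Fin N → ℕ) (j : Fin N) (x : ℕ) (hg : g j = 0) :
    (∑ k, Function.update g j x k) = x + ∑ k, g k := by
  rw [← Finset.add_sum_erase _ _ (Finset.mem_univ j), Function.update_self]
  rw [← Finset.add_sum_erase _ g (Finset.mem_univ j), hg, zero_add]
  congr 1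
  refine Finset.sum_congr rfl fun k hk => ?_
  exact Function.update_of_ne (Finset.mem_erase.1 hk).1 x g

private lemma prod_choose_update {N : ℕ} (n g : Fin N → ℕ) (j : Fin N) (x : ℕ) :
    (∏ k, ((n k).choose (Function.update g j x k) : ℚ))
      = ((n j).choose x : ℚ) * ∏ k ∈ Finset.univ.erase j, ((n k).choose (g k) : ℚ) := by
  rw [← Finset.mul_prod_erase _ _ (Finset.mem_univ j), Function.update_self]
  congr 1
  refine Finset.prod_congr rfl fun k hk => ?_
  rw [Function.update_of_ne (Finset.mem_erase.1 hk).1]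

/-- The inner sum after splitting off coordinate `j`. -/
private def Dfun (r : ℕ) (m : Fin (r + 1) → ℕ) (w : (Fin (r + 1) → ℕ) → ℚ)
    (n : Fin (r + 1) → ℕ) (j : Fin (r + 1)) (c : ℕ) (u : Fin (r + 1) → ℕ) (x : ℕ) : ℚ :=
  ∑ g ∈ below (Function.update n j 0),
    (-1 : ℚ) ^ (x + ∑ k, g k) * (c : ℚ) * (∏ k ∈ Finset.univ.erase j, ((n k).choose (g k) : ℚ)) *
      w (fun k => m k - u k - Function.update g j x k)

private lemma Sfun_split (r : ℕ) (m : Fin (r + 1) → ℕ) (w : (Fin (r + 1) → ℕ) → ℚ)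
    (u n : Fin (r + 1) → ℕ) (j : Fin (r + 1)) :
    Sfun r m w u n = ∑ x ∈ Finset.range (n j + 1), Dfun r m w n j ((n j).choose x) u x := by
  rw [Sfun, sum_below_split n j]
  refine Finset.sum_congr rfl fun x _ => ?_
  rw [Dfun]
  refine Finset.sum_congr rfl fun g hg => ?_
  have hg0 : g j = 0 := by
    have := mem_below.1 hg j
    rwa [Function.update_self, Nat.le_zero] at this
  rw [sum_update_eq g j x hg0, prod_choose_update n g j x]
  ring

private lemma Dfun_add (r : ℕ) (m : Fin (r + 1) → ℕ) (w : (Fin (r + 1) → ℕ) → ℚ)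
    (n : Fin (r + 1) → ℕ) (j : Fin (r + 1)) (a b : ℕ) (u : Fin (r + 1) → ℕ) (x : ℕ) :
    Dfun r m w n j (a + b) u x = Dfun r m w n j a u x + Dfun r m w n j b u x := by
  rw [Dfun, Dfun, Dfun, ← Finset.sum_add_distrib]
  refine Finset.sum_congr rfl fun g _ => ?_
  push_cast
  ring

private lemma Dfun_zero (r : ℕ) (m : Fin (r + 1) → ℕ) (w : (Fin (r + 1) → ℕ) → ℚ)
    (n : Fin (r + 1) → ℕ) (j : Fin (r + 1)) (u : Fin (r + 1) → ℕ) (x : ℕ) :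
    Dfun r m w n j 0 u x = 0 := by
  rw [Dfun]
  refine Finset.sum_eq_zero fun g _ => ?_
  simp

private lemma Dfun_update_n (r : ℕ) (m : Fin (r + 1) → ℕ) (w : (Fin (r + 1) → ℕ) → ℚ)
    (n : Fin (r + 1) → ℕ) (j : Fin (r + 1)) (n' c : ℕ) (u : Fin (r + 1) → ℕ) (x : ℕ) :
    Dfun r m w (Function.update n j n') j c u x = Dfun r m w n j c u x := by
  rw [Dfun, Dfun, Function.update_idem]
  refine Finset.sum_congr rfl fun g _ => ?_
  congr 2
  refine Finset.prod_congr rfl fun k hk => ?_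
  rw [Function.update_of_ne (Finset.mem_erase.1 hk).1]

private lemma Dfun_shift (r : ℕ) (m : Fin (r + 1) → ℕ) (w : (Fin (r + 1) → ℕ) → ℚ)
    (n : Fin (r + 1) → ℕ) (j : Fin (r + 1)) (c : ℕ) (u : Fin (r + 1) → ℕ) (x : ℕ) :
    Dfun r m w n j c (Function.update u j (u j + 1)) x = - Dfun r m w n j c u (x + 1) := by
  rw [Dfun, Dfun, ← Finset.sum_neg_distrib]
  refine Finset.sum_congr rfl fun g _ => ?_
  have hw : (fun k => m k - Function.update u j (u j + 1) k - Function.update g j x k)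
      = fun k => m k - u k - Function.update g j (x + 1) k := by
    funext k
    by_cases hk : k = j
    · subst hk
      rw [Function.update_self, Function.update_self, Function.update_self]
      omega
    · rw [Function.update_of_ne hk, Function.update_of_ne hk, Function.update_of_ne hk]
  rw [hw]
  have hs : x + 1 + ∑ k, g k = (x + ∑ k, g k) + 1 := by ring
  rw [hs, pow_succ]
  ring

private lemma Sfun_rec (r : ℕ) (m : Fin (r + 1) → ℕ) (w : (Fin (r + 1) → ℕ) → ℚ)
    (u n : Fin (r + 1) → ℕ) (j : Fin (r + 1)) (n' : ℕ) (hn : n j = n' + 1) :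
    Sfun r m w u n
      = Sfun r m w u (Function.update n j n')
        - Sfun r m w (Function.update u j (u j + 1)) (Function.update n j n') := by
  rw [Sfun_split r m w u n j, Sfun_split r m w u (Function.update n j n') j,
    Sfun_split r m w (Function.update u j (u j + 1)) (Function.update n j n') j]
  simp only [Function.update_self, Dfun_update_n]
  rw [hn]
  have hpascal : ∀ x, (n' + 1).choose (x + 1) = n'.choose x + n'.choose (x + 1) :=
    fun x => Nat.choose_succ_succ n' x
  rw [Finset.sum_range_succ']
  have h1 : (∑ x ∈ Finset.range (n' + 1), Dfun r m w n j ((n' + 1).choose (x + 1)) u (x + 1))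
      = (∑ x ∈ Finset.range (n' + 1), Dfun r m w n j (n'.choose x) u (x + 1))
        + ∑ x ∈ Finset.range (n' + 1), Dfun r m w n j (n'.choose (x + 1)) u (x + 1) := by
    rw [← Finset.sum_add_distrib]
    refine Finset.sum_congr rfl fun x _ => ?_
    rw [hpascal x, Dfun_add]
  rw [h1]
  have h2 : (∑ x ∈ Finset.range (n' + 1),
      Dfun r m w n j (n'.choose x) (Function.update u j (u j + 1)) x)
      = - ∑ x ∈ Finset.range (n' + 1), Dfun r m w n j (n'.choose x) u (x + 1) := by
    rw [← Finset.sum_neg_distrib]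
    exact Finset.sum_congr rfl fun x _ => Dfun_shift r m w n j _ u x
  rw [h2]
  have h3 : (∑ x ∈ Finset.range (n' + 1), Dfun r m w n j (n'.choose x) u x)
      = (∑ x ∈ Finset.range n', Dfun r m w n j (n'.choose (x + 1)) u (x + 1))
        + Dfun r m w n j (n'.choose 0) u 0 := Finset.sum_range_succ' _ n'
  rw [h3]
  have h4 : (∑ x ∈ Finset.range (n' + 1), Dfun r m w n j (n'.choose (x + 1)) u (x + 1))
      = ∑ x ∈ Finset.range n', Dfun r m w n j (n'.choose (x + 1)) u (x + 1) := by
    rw [Finset.sum_range_succ, Nat.choose_succ_self, Dfun_zero, add_zero]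
  rw [h4]
  have h5 : (n' + 1).choose 0 = n'.choose 0 := by simp
  rw [h5]
  abel

private lemma triC_zero (r : ℕ) (m : Fin (r + 1) → ℕ) (w : (Fin (r + 1) → ℕ) → ℚ)
    (u : Fin (r + 1) → ℕ) : triC r m w u 0 = w fun j => m j - u j := by
  rw [triC_eq]
  have h0 : below (0 : Fin (r + 1) → ℕ) = {fun _ => 0} := by
    ext g
    simp [mem_below, funext_iff]
  rw [Sfun, h0, Finset.sum_singleton]
  simp

private lemma triC_rec (r : ℕ) (m : Fin (r + 1) → ℕ) (w : (Fin (r + 1) → ℕ) → ℚ)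
    (u i : Fin (r + 1) → ℕ) (j : Fin (r + 1)) (hij : 1 ≤ i j) :
    triC r m w u i
      = (triC r m w (u + Pi.single j 1) (i - Pi.single j 1)
          - triC r m w u (i - Pi.single j 1)) / 2 := by
  set n' : ℕ := i j - 1 with hn'
  have hn : i j = n' + 1 := by omega
  have hi' : i - Pi.single j 1 = Function.update i j n' := by
    funext k
    by_cases hk : k = j
    · subst hk
      simp [Pi.sub_apply, hn']
    · simp [Pi.sub_apply, Pi.single_eq_of_ne hk, Function.update_of_ne hk]
  have hu' : u + Pi.single j 1 = Function.update u j (u j + 1) := by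
    funext k
    by_cases hk : k = j
    · subst hk
      simp [Pi.add_apply]
    · simp [Pi.add_apply, Pi.single_eq_of_ne hk, Function.update_of_ne hk]
  have hsum : (∑ k, i k) = n' + 1 + ∑ k ∈ Finset.univ.erase j, i k := by
    rw [← Finset.add_sum_erase _ _ (Finset.mem_univ j), hn]
  have hsum' : (∑ k, Function.update i j n' k) = n' + ∑ k ∈ Finset.univ.erase j, i k := by
    rw [← Finset.add_sum_erase _ _ (Finset.mem_univ j), Function.update_self]
    congr 1
    exact Finset.sum_congr rfl fun k hk => Function.update_of_ne (Finset.mem_erase.1 hk).1 _ _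
  rw [hi', hu', triC_eq, triC_eq, triC_eq, hsum, hsum',
    Sfun_rec r m w u i j n' hn]
  set σ := ∑ k ∈ Finset.univ.erase j, i k
  have hstep : n' + 1 + σ = (n' + σ) + 1 := by omega
  rw [hstep, pow_succ, pow_succ]
  have h2 : (2 : ℚ) ^ (n' + σ) ≠ 0 := by positivity
  field_simp
  ring

private lemma aux_alt (d : ℕ) :
    (∑ t ∈ Finset.range (d + 1), (-1 : ℚ) ^ t * d.choose t) = if d = 0 then 1 else 0 := by
  have h := Int.alternating_sum_range_choose (n := d)
  have := congrArg (fun z : ℤ => (z : ℚ)) h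
  push_cast at this
  rw [this]

private lemma aux1 (M a l : ℕ) (ha : a ≤ M) :
    (∑ x ∈ Finset.range (M + 1), (-1 : ℚ) ^ x * a.choose x * x.choose l)
      = if a = l then (-1 : ℚ) ^ l else 0 := by
  rcases lt_or_ge a l with hla | hla
  · rw [if_neg (by omega)]
    refine Finset.sum_eq_zero fun x _ => ?_
    rcases lt_or_ge x l with hxl | hxl
    · rw [Nat.choose_eq_zero_of_lt hxl]
      push_cast
      ring
    · rw [Nat.choose_eq_zero_of_lt (by omega : a < x)]
      push_cast
      ring
  · have hsub : (∑ x ∈ Finset.range (M + 1), (-1 : ℚ) ^ x * a.choose x * x.choose l)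
        = ∑ x ∈ Finset.Ico l (M + 1), (-1 : ℚ) ^ x * a.choose x * x.choose l := by
      refine (Finset.sum_subset ?_ ?_).symm
      · intro x hx
        rw [Finset.mem_Ico] at hx
        exact Finset.mem_range.2 hx.2
      · intro x hx hx'
        rw [Finset.mem_range] at hx
        rw [Finset.mem_Ico, not_and_or] at hx'
        have hxl : x < l := by omega
        rw [Nat.choose_eq_zero_of_lt hxl]
        push_cast
        ring
    rw [hsub, Finset.sum_Ico_eq_sum_range]
    have hterm : ∀ t, (-1 : ℚ) ^ (l + t) * a.choose (l + t) * (l + t).choose l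
        = ((-1 : ℚ) ^ l * a.choose l) * ((-1 : ℚ) ^ t * (a - l).choose t) := by
      intro t
      rcases le_or_gt (l + t) a with h1 | h1
      · have := Nat.choose_mul (n := a) (k := l + t) (s := l) (Nat.le_add_right l t)
        rw [Nat.add_sub_cancel_left] at this
        have hcast : (a.choose (l + t) * (l + t).choose l : ℚ)
            = (a.choose l * (a - l).choose t : ℚ) := by exact_mod_cast this
        rw [pow_add]
        push_cast at hcast ⊢
        linear_combination ((-1 : ℚ) ^ l * (-1) ^ t) * hcast
      · rw [Nat.choose_eq_zero_of_lt h1, Nat.choose_eq_zero_of_lt (by omega : a - l < t)]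
        push_cast
        ring
    rw [Finset.sum_congr rfl fun t _ => hterm t, ← Finset.mul_sum]
    have hfin : (∑ t ∈ Finset.range (M + 1 - l), (-1 : ℚ) ^ t * (a - l).choose t)
        = if a - l = 0 then 1 else 0 := by
      rw [← aux_alt (a - l)]
      refine (Finset.sum_subset ?_ ?_).symm
      · intro t ht
        rw [Finset.mem_range] at ht ⊢
        omega
      · intro t ht ht'
        rw [Finset.mem_range, not_lt] at ht'
        rw [Nat.choose_eq_zero_of_lt (by omega : a - l < t)]
        simp
    rw [hfin]
    by_cases hal : a = l
    · subst hal
      rw [if_pos rfl, if_pos (by omega), Nat.choose_self]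
      norm_num
    · rw [if_neg (by omega), if_neg hal, mul_zero]

private def Tl (r : ℕ) (m : Fin (r + 1) → ℕ) (w : (Fin (r + 1) → ℕ) → ℚ)
    (s : (j : Fin (r + 1)) → Fin (m j + 1)) (i l : Fin (r + 1) → ℕ) : ℚ :=
  ((-1 : ℚ) ^ (∑ k, i k) * ∏ k, ((m k - (s k : ℕ)).choose (i k) : ℚ)) *
    ((-1 : ℚ) ^ (∑ k, l k) * (∏ k, ((i k).choose (l k) : ℚ)) *
      w (fun k => m k - (0 : Fin (r + 1) → ℕ) k - l k))

private lemma key_c (r : ℕ) (m : Fin (r + 1) → ℕ) (w : (Fin (r + 1) → ℕ) → ℚ)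
    (s : (j : Fin (r + 1)) → Fin (m j + 1)) (i : Fin (r + 1) → ℕ) (hi : i ∈ below m) :
    (2 : ℚ) ^ (∑ j, i j) * (∏ j, ((m j - (s j : ℕ)).choose (i j) : ℚ)) * triC r m w 0 i
      = ∑ l ∈ below m, Tl r m w s i l := by
  have h2 : ((2 : ℚ) ^ (∑ j, i j)) ≠ 0 := by positivity
  rw [triC_eq]
  have step1 : (2 : ℚ) ^ (∑ j, i j) * (∏ j, ((m j - (s j : ℕ)).choose (i j) : ℚ)) *
      (((2 : ℚ) ^ (∑ j, i j))⁻¹ * ((-1) ^ (∑ j, i j) * Sfun r m w 0 i))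
      = (-1 : ℚ) ^ (∑ j, i j) * (∏ j, ((m j - (s j : ℕ)).choose (i j) : ℚ)) *
        Sfun r m w 0 i := by
    field_simp
  rw [step1, Sfun]
  have step2 : (∑ l ∈ below i, (-1 : ℚ) ^ (∑ k, l k) * (∏ k, ((i k).choose (l k) : ℚ)) *
        w (fun k => m k - (0 : Fin (r + 1) → ℕ) k - l k))
      = ∑ l ∈ below m, (-1 : ℚ) ^ (∑ k, l k) * (∏ k, ((i k).choose (l k) : ℚ)) *
        w (fun k => m k - (0 : Fin (r + 1) → ℕ) k - l k) := by
    refine Finset.sum_subset ?_ ?_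
    · intro g hg
      exact mem_below.2 fun k => le_trans (mem_below.1 hg k) (mem_below.1 hi k)
    · intro l _ hl
      obtain ⟨k, hk⟩ : ∃ k, i k < l k := by
        by_contra hcon
        push_neg at hcon
        exact hl (mem_below.2 fun k => hcon k)
      rw [Finset.prod_eq_zero (Finset.mem_univ k)
        (by exact_mod_cast congrArg (Nat.cast (R := ℚ)) (Nat.choose_eq_zero_of_lt hk))]
      ring
  rw [step2, Finset.mul_sum]
  exact Finset.sum_congr rfl fun l _ => by rw [Tl]

private lemma inner_c (r : ℕ) (m : Fin (r + 1) → ℕ) (w : (Fin (r + 1) → ℕ) → ℚ)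
    (s : (j : Fin (r + 1)) → Fin (m j + 1)) (l : Fin (r + 1) → ℕ) :
    (∑ i ∈ below m, Tl r m w s i l)
      = ((-1 : ℚ) ^ (∑ k, l k) * w (fun k => m k - (0 : Fin (r + 1) → ℕ) k - l k)) *
          ∏ k, (if m k - (s k : ℕ) = l k then (-1 : ℚ) ^ (l k) else 0) := by
  have step1 : ∀ i, Tl r m w s i l
      = ((-1 : ℚ) ^ (∑ k, l k) * w (fun k => m k - (0 : Fin (r + 1) → ℕ) k - l k)) *
          ∏ k, ((-1 : ℚ) ^ (i k) * ((m k - (s k : ℕ)).choose (i k) : ℚ) *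
            ((i k).choose (l k) : ℚ)) := by
    intro i
    rw [Tl, Finset.prod_mul_distrib, Finset.prod_mul_distrib, Finset.prod_pow_eq_pow_sum]
    ring
  rw [Finset.sum_congr rfl fun i _ => step1 i, ← Finset.mul_sum]
  congr 1
  have step2 : (∑ i ∈ below m, ∏ k, ((-1 : ℚ) ^ (i k) *
        ((m k - (s k : ℕ)).choose (i k) : ℚ) * ((i k).choose (l k) : ℚ)))
      = ∏ k, ∑ x ∈ Finset.range (m k + 1),
          ((-1 : ℚ) ^ x * ((m k - (s k : ℕ)).choose x : ℚ) * (x.choose (l k) : ℚ)) :=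
    (Finset.prod_univ_sum (fun k => Finset.range (m k + 1))
      (fun k x => (-1 : ℚ) ^ x * ((m k - (s k : ℕ)).choose x : ℚ) * (x.choose (l k) : ℚ))).symm
  rw [step2]
  exact Finset.prod_congr rfl fun k _ => aux1 (m k) _ (l k) (Nat.sub_le _ _)

private lemma part_c (r : ℕ) (m : Fin (r + 1) → ℕ) (w : (Fin (r + 1) → ℕ) → ℚ)
    (s : (j : Fin (r + 1)) → Fin (m j + 1)) :
    (∑ i : (j : Fin (r + 1)) → Fin (m j + 1),
        2 ^ (∑ j, (i j : ℕ)) * (∏ j, ((m j - (s j : ℕ)).choose ((i j : ℕ)) : ℚ)) *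
          triC r m w 0 (fun j => (i j : ℕ)))
      = w (fun j => (s j : ℕ)) := by
  refine Eq.trans (sum_fin_pi m (fun i => 2 ^ (∑ j, i j) *
    (∏ j, ((m j - (s j : ℕ)).choose (i j) : ℚ)) * triC r m w 0 i)) ?_
  rw [Finset.sum_congr rfl fun i hi => key_c r m w s i hi, Finset.sum_comm,
    Finset.sum_congr rfl fun l _ => inner_c r m w s l]
  set l₀ : Fin (r + 1) → ℕ := fun k => m k - (s k : ℕ) with hl₀
  have hmem : l₀ ∈ below m := mem_below.2 fun k => Nat.sub_le _ _
  rw [Finset.sum_eq_single l₀ ?_ ?_]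
  · have hprod : (∏ k, (if m k - (s k : ℕ) = l₀ k then (-1 : ℚ) ^ (l₀ k) else 0))
        = (-1 : ℚ) ^ (∑ k, l₀ k) := by
      rw [Finset.prod_congr rfl fun k _ => if_pos rfl, Finset.prod_pow_eq_pow_sum]
    rw [hprod]
    have hneg : (-1 : ℚ) ^ (∑ k, l₀ k) * (-1 : ℚ) ^ (∑ k, l₀ k) = 1 := by
      rw [← pow_add, ← two_mul, pow_mul]
      norm_num
    have hw : (fun k => m k - (0 : Fin (r + 1) → ℕ) k - l₀ k) = fun k => (s k : ℕ) := by
      funext k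
      have := (s k).isLt
      show m k - 0 - (m k - (s k : ℕ)) = (s k : ℕ)
      omega
    rw [hw]
    calc ((-1 : ℚ) ^ (∑ k, l₀ k) * w fun k => (s k : ℕ)) * (-1 : ℚ) ^ (∑ k, l₀ k)
        = (w fun k => (s k : ℕ)) * ((-1 : ℚ) ^ (∑ k, l₀ k) * (-1 : ℚ) ^ (∑ k, l₀ k)) := by
          ring
      _ = w fun k => (s k : ℕ) := by rw [hneg, mul_one]
  · intro l _ hl
    obtain ⟨k, hk⟩ : ∃ k, ¬ m k - (s k : ℕ) = l k := by
      by_contra hcon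
      push_neg at hcon
      exact hl (funext fun k => (hcon k).symm)
    rw [Finset.prod_eq_zero (Finset.mem_univ k)
      (if_neg hk : (if m k - (s k : ℕ) = l k then (-1 : ℚ) ^ (l k) else 0) = 0), mul_zero]
  · intro h
    exact absurd hmem h


/-- (a) `c_𝟎^𝐮 = w_{𝐦-𝐮}`; (b) the triangle recursion
`c_𝐢^𝐮 = (c_{𝐢-e_j}^{𝐮+e_j} - c_{𝐢-e_j}^𝐮)/2` holds for any coordinate `j` with `i_j ≥ 1`;
(c) the vector `b_𝐢 = c_𝐢^𝟎` satisfies `M_𝐦 b = w`, i.e.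
`Σ_{𝐢 ∈ ℕ_𝐦} 2^{|𝐢|} binom(𝐦-𝐬,𝐢) b_𝐢 = w_𝐬` for every `𝐬 ∈ ℕ_𝐦`. -/
theorem stmt3 (r : ℕ) (m : Fin (r + 1) → ℕ) (w : (Fin (r + 1) → ℕ) → ℚ) :
    (∀ u : Fin (r + 1) → ℕ, (∀ j, u j ≤ m j) →
      triC r m w u 0 = w (fun j => m j - u j)) ∧
    (∀ u i : Fin (r + 1) → ℕ, (∀ j, u j + i j ≤ m j) →
      ∀ j : Fin (r + 1), 1 ≤ i j →
        triC r m w u i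
          = (triC r m w (u + Pi.single j 1) (i - Pi.single j 1)
              - triC r m w u (i - Pi.single j 1)) / 2) ∧
    (∀ s : (j : Fin (r + 1)) → Fin (m j + 1),
      ∑ i : (j : Fin (r + 1)) → Fin (m j + 1),
        2 ^ (∑ j, (i j : ℕ)) * (∏ j, ((m j - (s j : ℕ)).choose ((i j : ℕ)) : ℚ)) *
          triC r m w 0 (fun j => (i j : ℕ))
        = w (fun j => (s j : ℕ))) := by
  refine ⟨fun u _ => triC_zero r m w u,
    fun u i _ j hij => triC_rec r m w u i j hij,
    fun s => part_c r m w s⟩
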